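/- In a finite tree, for any two vertices λ₁, λ₂ and weights w₁, w₂ > 0 with w₁ + w₂ = 1, every minimizer of y ↦ w₁·d²(y,λ₁) + w₂·d²(y,λ₂) lies on the unique path between λ₁ and λ₂. Hence the two-point locus Π({λ₁, λ₂}) equals exactly the vertex set of the path Γ(λ₁, λ₂). -/

import Mathlib

open SimpleGraph

/-- Along any walk, the vertex after `k` steps is within `k` of the start and
within `length - k` of the end. -/
lemma walk_split_dist {V : Type*} {G : SimpleGraph V} (hc : G.Connected)
    {u v : V} (p : G.Walk u v) : ∀ k : ℕ, k ≤ p.length →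
      ∃ z : V, G.dist u z ≤ k ∧ G.dist z v ≤ p.length - k := by
  induction p with
  | @nil w =>
    intro k hk
    exact ⟨w, by simp [SimpleGraph.dist_self], by simp [SimpleGraph.dist_self]⟩
  | @cons u x v h q ih =>
    intro k hk
    cases k with
    | zero =>
      refine ⟨u, by simp [SimpleGraph.dist_self], ?_⟩
      simpa using SimpleGraph.dist_le (SimpleGraph.Walk.cons h q)
    | succ k =>
      obtain ⟨z, hz1, hz2⟩ := ih k (by simpa using hk)
      refine ⟨z, ?_, by simpa using hz2⟩
      calc G.dist u z ≤ G.dist u x + G.dist x z := hc.dist_triangle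
        _ ≤ 1 + k := by
            have : G.dist u x ≤ 1 := SimpleGraph.dist_le (SimpleGraph.Walk.cons h .nil)
            omega
        _ = k + 1 := by omega

/-- In a finite tree, every two-point Fréchet mean with strictly positive
weights lies on the path between the two points, and the two-point locus
equals exactly the vertex set of that path. -/
theorem tree_two_point_locus_eq_path
    {V : Type*} [Fintype V] (G : SimpleGraph V) (hT : G.IsTree)
    (l₁ l₂ : V) :
    (∀ w₁ w₂ : ℝ, 0 < w₁ → 0 < w₂ → w₁ + w₂ = 1 →
      ∀ y : V,
        (∀ z : V, w₁ * (G.dist y l₁ : ℝ) ^ 2 + w₂ * (G.dist y l₂ : ℝ) ^ 2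
                ≤ w₁ * (G.dist z l₁ : ℝ) ^ 2 + w₂ * (G.dist z l₂ : ℝ) ^ 2) →
        G.dist l₁ y + G.dist y l₂ = G.dist l₁ l₂) ∧
    {y : V | ∃ w₁ w₂ : ℝ, 0 ≤ w₁ ∧ 0 ≤ w₂ ∧ w₁ + w₂ = 1 ∧
        ∀ z : V, w₁ * (G.dist y l₁ : ℝ) ^ 2 + w₂ * (G.dist y l₂ : ℝ) ^ 2
                ≤ w₁ * (G.dist z l₁ : ℝ) ^ 2 + w₂ * (G.dist z l₂ : ℝ) ^ 2}
      = {y : V | G.dist l₁ y + G.dist y l₂ = G.dist l₁ l₂} := by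
  have hc : G.Connected := hT.isConnected
  -- Part 1 as a standalone fact
  have part1 : ∀ w₁ w₂ : ℝ, 0 < w₁ → 0 < w₂ → w₁ + w₂ = 1 →
      ∀ y : V,
        (∀ z : V, w₁ * (G.dist y l₁ : ℝ) ^ 2 + w₂ * (G.dist y l₂ : ℝ) ^ 2
                ≤ w₁ * (G.dist z l₁ : ℝ) ^ 2 + w₂ * (G.dist z l₂ : ℝ) ^ 2) →
        G.dist l₁ y + G.dist y l₂ = G.dist l₁ l₂ := by
    intro w₁ w₂ hw₁ hw₂ hsum y hmin
    have hya : G.dist y l₁ = G.dist l₁ y := SimpleGraph.dist_comm ..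
    have htri : G.dist l₁ l₂ ≤ G.dist l₁ y + G.dist y l₂ := hc.dist_triangle
    by_contra hne
    have hgt : G.dist l₁ l₂ < G.dist l₁ y + G.dist y l₂ :=
      lt_of_le_of_ne htri (fun h => hne h.symm)
    by_cases hcase : G.dist l₁ y ≤ G.dist l₁ l₂
    · -- take the point at distance `dist l₁ y` along a geodesic from l₁ to l₂
      obtain ⟨p, hp⟩ := hc.exists_walk_length_eq_dist l₁ l₂
      obtain ⟨z, hz1, hz2⟩ := walk_split_dist hc p (G.dist l₁ y) (by omega)
      rw [hp] at hz2
      have hzl₁ : G.dist z l₁ ≤ G.dist l₁ y := by rw [SimpleGraph.dist_comm]; exact hz1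
      have hzl₂ : G.dist z l₂ < G.dist y l₂ := by omega
      have h1 : (G.dist z l₁ : ℝ) ^ 2 ≤ (G.dist l₁ y : ℝ) ^ 2 := by
        have h : (G.dist z l₁ : ℝ) ≤ (G.dist l₁ y : ℝ) := by exact_mod_cast hzl₁
        nlinarith [Nat.cast_nonneg (α := ℝ) (G.dist z l₁)]
      have h2 : (G.dist z l₂ : ℝ) ^ 2 < (G.dist y l₂ : ℝ) ^ 2 := by
        have h : (G.dist z l₂ : ℝ) < (G.dist y l₂ : ℝ) := by exact_mod_cast hzl₂
        nlinarith [Nat.cast_nonneg (α := ℝ) (G.dist z l₂)]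
      have hm := hmin z
      rw [hya] at hm
      linarith [mul_le_mul_of_nonneg_left h1 hw₁.le, (mul_lt_mul_iff_right₀ hw₂).mpr h2]
    · -- dist l₁ y > dist l₁ l₂ : the point l₂ is strictly better
      have hm := hmin l₂
      rw [hya, SimpleGraph.dist_self,
        show G.dist l₂ l₁ = G.dist l₁ l₂ from SimpleGraph.dist_comm ..] at hm
      have hDa : (G.dist l₁ l₂ : ℝ) ^ 2 < (G.dist l₁ y : ℝ) ^ 2 := by
        have h : (G.dist l₁ l₂ : ℝ) < (G.dist l₁ y : ℝ) := by
          exact_mod_cast (by omega : G.dist l₁ l₂ < G.dist l₁ y)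
        nlinarith [Nat.cast_nonneg (α := ℝ) (G.dist l₁ l₂)]
      push_cast at hm
      linarith [mul_nonneg hw₂.le (sq_nonneg (G.dist y l₂ : ℝ)),
        (mul_lt_mul_iff_right₀ hw₁).mpr hDa]
  refine ⟨part1, ?_⟩
  ext y
  simp only [Set.mem_setOf_eq]
  constructor
  · rintro ⟨w₁, w₂, hw₁, hw₂, hsum, hmin⟩
    rcases hw₁.lt_or_eq with h1 | h1
    · rcases hw₂.lt_or_eq with h2 | h2
      · exact part1 w₁ w₂ h1 h2 hsum y hmin
      · -- w₂ = 0, so w₁ = 1 and y = l₁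
        have hm := hmin l₁
        rw [← h2, SimpleGraph.dist_self] at hm
        push_cast at hm
        have hy0 : (G.dist y l₁ : ℝ) ^ 2 ≤ 0 := by nlinarith [hm, h1]
        have hy : G.dist y l₁ = 0 := by
          have h' : (G.dist y l₁ : ℝ) = 0 :=
            pow_eq_zero_iff two_ne_zero |>.mp (le_antisymm hy0 (sq_nonneg _))
          exact_mod_cast h'
        have hyl : y = l₁ := (hc.dist_eq_zero_iff).mp hy
        subst hyl
        rw [SimpleGraph.dist_self]
        rw [SimpleGraph.dist_self] at hy
        omega
    · -- w₁ = 0, so w₂ = 1 and y = l₂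
      have hm := hmin l₂
      rw [← h1, SimpleGraph.dist_self] at hm
      push_cast at hm
      have hw₂1 : 0 < w₂ := by linarith
      have hy0 : (G.dist y l₂ : ℝ) ^ 2 ≤ 0 := by nlinarith [hm, hw₂1]
      have hy : G.dist y l₂ = 0 := by
        have h' : (G.dist y l₂ : ℝ) = 0 :=
          pow_eq_zero_iff two_ne_zero |>.mp (le_antisymm hy0 (sq_nonneg _))
        exact_mod_cast h'
      have hyl : y = l₂ := (hc.dist_eq_zero_iff).mp hy
      subst hyl
      omega
  · intro hd
    by_cases hD0 : G.dist l₁ l₂ = 0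
    · -- degenerate: y = l₁
      have ha : G.dist l₁ y = 0 := by omega
      have hy : l₁ = y := (hc.dist_eq_zero_iff).mp ha
      refine ⟨1, 0, zero_le_one, le_refl 0, by norm_num, ?_⟩
      intro z
      have h0 : G.dist y l₁ = 0 := by rw [SimpleGraph.dist_comm]; exact ha
      rw [h0]
      push_cast
      nlinarith [sq_nonneg ((G.dist z l₁ : ℝ)), sq_nonneg ((G.dist z l₂ : ℝ)),
        sq_nonneg ((G.dist y l₂ : ℝ))]
    · -- main case: weights b/D and a/D
      have hDpos : (0 : ℝ) < (G.dist l₁ l₂ : ℝ) := by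
        exact_mod_cast Nat.pos_of_ne_zero hD0
      refine ⟨(G.dist y l₂ : ℝ) / (G.dist l₁ l₂ : ℝ),
        (G.dist l₁ y : ℝ) / (G.dist l₁ l₂ : ℝ), by positivity, by positivity, ?_, ?_⟩
      · rw [← add_div, div_eq_one_iff_eq (ne_of_gt hDpos)]
        exact_mod_cast (by omega : G.dist y l₂ + G.dist l₁ y = G.dist l₁ l₂)
      · intro z
        have hya : G.dist y l₁ = G.dist l₁ y := SimpleGraph.dist_comm ..
        have htriz : G.dist l₁ l₂ ≤ G.dist z l₁ + G.dist z l₂ := by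
          have := hc.dist_triangle (u := l₁) (v := z) (w := l₂)
          rwa [show G.dist l₁ z = G.dist z l₁ from SimpleGraph.dist_comm ..] at this
        rw [hya]
        set A : ℝ := (G.dist l₁ y : ℝ) with hA
        set B : ℝ := (G.dist y l₂ : ℝ) with hB
        set P : ℝ := (G.dist z l₁ : ℝ) with hP
        set Q : ℝ := (G.dist z l₂ : ℝ) with hQ
        set D : ℝ := (G.dist l₁ l₂ : ℝ) with hDR
        have hAB : A + B = D := by rw [hA, hB, hDR]; exact_mod_cast hd
        have hPQ : A + B ≤ P + Q := by
          rw [hAB, hDR, hP, hQ]; exact_mod_cast htriz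
        have hA0 : 0 ≤ A := by rw [hA]; positivity
        have hB0 : 0 ≤ B := by rw [hB]; positivity
        have hP0 : 0 ≤ P := by rw [hP]; positivity
        have hQ0 : 0 ≤ Q := by rw [hQ]; positivity
        have key : B * A ^ 2 + A * B ^ 2 ≤ B * P ^ 2 + A * Q ^ 2 := by
          have hDpos' : 0 < A + B := by rw [hAB]; exact hDpos
          nlinarith [sq_nonneg (B * P - A * Q),
            mul_nonneg (mul_nonneg (mul_nonneg hA0 hB0) (sub_nonneg.mpr hPQ))
              (by linarith : (0:ℝ) ≤ P + Q + (A + B)), hDpos']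
        calc B / D * A ^ 2 + A / D * B ^ 2 = (B * A ^ 2 + A * B ^ 2) / D := by ring
          _ ≤ (B * P ^ 2 + A * Q ^ 2) / D := (div_le_div_iff_of_pos_right hDpos).mpr key
          _ = B / D * P ^ 2 + A / D * Q ^ 2 := by ring
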